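/- For bounded selfadjoint operators H and H' on a complex Hilbert space, the Duhamel formula holds: exp(−itH) − exp(−itH') = −i ∫₀ᵗ exp(−isH)·(H − H')·exp(−i(t−s)H') ds. -/

import Mathlib

open scoped Interval

lemma duhamel_aux {A : Type*} [Ring A] [Algebra ℂ A] (a x y b : A) :
    (-Complex.I) • (a * (x - y) * b) = (-Complex.I) • (a * x) * b + a * (Complex.I • (y * b)) := by
  simp only [mul_sub, sub_mul, smul_sub, smul_mul_assoc, mul_smul_comm, mul_assoc]
  rw [sub_eq_add_neg, ← neg_smul, neg_neg]

set_option maxHeartbeats 1000000 in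
/-- Duhamel formula: for bounded selfadjoint operators `H₀`, `H₁`,
`exp(−itH₀) − exp(−itH₁) = −i ∫₀ᵗ exp(−isH₀)(H₀ − H₁)exp(−i(t−s)H₁) ds`. -/
theorem duhamel_formula
    {H : Type*} [NormedAddCommGroup H] [InnerProductSpace ℂ H] [CompleteSpace H]
    (H₀ H₁ : H →L[ℂ] H) (hH₀ : IsSelfAdjoint H₀) (hH₁ : IsSelfAdjoint H₁) (t : ℝ) :
    NormedSpace.exp ((-Complex.I * (t : ℂ)) • H₀) -
        NormedSpace.exp ((-Complex.I * (t : ℂ)) • H₁) =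
      (-Complex.I) •
        ∫ s in (0 : ℝ)..t,
          NormedSpace.exp ((-Complex.I * (s : ℂ)) • H₀) * (H₀ - H₁) *
            NormedSpace.exp ((-Complex.I * ((t - s : ℝ) : ℂ)) • H₁) := by
  set E₀ : ℝ → (H →L[ℂ] H) := fun s => NormedSpace.exp ((-Complex.I * (s : ℂ)) • H₀)
    with hE₀def
  set E₁ : ℝ → (H →L[ℂ] H) :=
    fun s => NormedSpace.exp ((-Complex.I * ((t - s : ℝ) : ℂ)) • H₁) with hE₁def
  -- derivative of the inner real-to-complex maps
  have hre : ∀ s : ℝ, HasDerivAt (fun s : ℝ => -Complex.I * (s : ℂ)) (-Complex.I) s := by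
    intro s
    simpa using (Complex.ofRealCLM.hasDerivAt (x := s)).const_mul (-Complex.I)
  have hre' : ∀ s : ℝ, HasDerivAt (fun s : ℝ => -Complex.I * ((t - s : ℝ) : ℂ))
      Complex.I s := by
    intro s
    have h1 : HasDerivAt (fun s : ℝ => ((t - s : ℝ) : ℂ)) (-1) s := by
      simpa using ((Complex.ofRealCLM.hasDerivAt (x := s)).const_sub (t : ℂ)).neg.neg
    have := h1.const_mul (-Complex.I)
    simpa using this
  have hA : ∀ s : ℝ, HasDerivAt E₀ ((-Complex.I) • (E₀ s * H₀)) s := by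
    intro s
    have hg : HasDerivAt (fun c : ℂ => NormedSpace.exp (c • H₀))
        (NormedSpace.exp ((-Complex.I * (s : ℂ)) • H₀) * H₀) (-Complex.I * (s : ℂ)) :=
      hasDerivAt_exp_smul_const H₀ _
    exact HasDerivAt.scomp s hg (hre s)
  have hB : ∀ s : ℝ, HasDerivAt E₁ (Complex.I • (E₁ s * H₁)) s := by
    intro s
    have hg : HasDerivAt (fun c : ℂ => NormedSpace.exp (c • H₁))
        (NormedSpace.exp ((-Complex.I * ((t - s : ℝ) : ℂ)) • H₁) * H₁)
        (-Complex.I * ((t - s : ℝ) : ℂ)) :=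
      hasDerivAt_exp_smul_const H₁ _
    exact HasDerivAt.scomp s hg (hre' s)
  have hcomm : ∀ s : ℝ, E₁ s * H₁ = H₁ * E₁ s := by
    intro s
    exact (((Commute.refl H₁).smul_left _).exp_left)
  have hderiv : ∀ s : ℝ, HasDerivAt (fun s => E₀ s * E₁ s)
      ((-Complex.I) • (E₀ s * (H₀ - H₁) * E₁ s)) s := by
    intro s
    have := (hA s).mul (hB s)
    refine this.congr_deriv ?_
    rw [hcomm s]
    exact (duhamel_aux (E₀ s) H₀ H₁ (E₁ s)).symm
  have hcont : Continuous fun s : ℝ => (-Complex.I) • (E₀ s * (H₀ - H₁) * E₁ s) := by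
    have c₀ : Continuous E₀ :=
      (by let +nondep : NormedAlgebra ℚ (H →L[ℂ] H) := .restrictScalars ℚ ℂ (H →L[ℂ] H)
          exact NormedSpace.exp_continuous :
        Continuous (NormedSpace.exp : (H →L[ℂ] H) → (H →L[ℂ] H))).comp (by fun_prop)
    have c₁ : Continuous E₁ :=
      (by let +nondep : NormedAlgebra ℚ (H →L[ℂ] H) := .restrictScalars ℚ ℂ (H →L[ℂ] H)
          exact NormedSpace.exp_continuous :
        Continuous (NormedSpace.exp : (H →L[ℂ] H) → (H →L[ℂ] H))).comp (by fun_prop)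
    fun_prop
  have key := intervalIntegral.integral_eq_sub_of_hasDerivAt
    (f := fun s => E₀ s * E₁ s)
    (f' := fun s => (-Complex.I) • (E₀ s * (H₀ - H₁) * E₁ s))
    (a := 0) (b := t) (fun s _ => hderiv s)
    (hcont.intervalIntegrable 0 t)
  rw [intervalIntegral.integral_smul] at key
  have hends : NormedSpace.exp ((-Complex.I * (t : ℂ)) • H₀) -
      NormedSpace.exp ((-Complex.I * (t : ℂ)) • H₁) = E₀ t * E₁ t - E₀ 0 * E₁ 0 := by
    simp [hE₀def, hE₁def, NormedSpace.exp_zero]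
  rw [hends, ← key]
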